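/- No substantial gain from truncation with N above N_δ: assume the sequence {μ_k/ξ_k} is monotone nonincreasing with μ_k/ξ_k → 0, and let δ > 0 satisfy δ < 1/ξ_0 (so N_δ ≥ 1). Then for any N > N_δ, ε_δ(A,W,G̃_N,Ψ̃_N)_H ≥ (1/√2) · ε_δ(A,W,G̃_{N_δ},Ψ̃_{N_δ})_H ≥ (1/√2) · R_{N_δ,δ}(A,W)_H. -/

import Mathlib

noncomputable section

open Filter
open scoped ENNReal RealInnerProductSpace

variable {H : Type*} [NormedAddCommGroup H] [InnerProductSpace ℝ H] [CompleteSpace H]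

/-- `f` belongs to the source set `W`. -/
def MemW (w : ℕ → H) (ξ : ℕ → ℝ) (f : H) : Prop :=
  Summable fun k => ξ k ^ 2 * ⟪f, w k⟫ ^ 2

/-- The `W`-norm of `f`. -/
def normW (w : ℕ → H) (ξ : ℕ → ℝ) (f : H) : ℝ :=
  Real.sqrt (∑' k, ξ k ^ 2 * ⟪f, w k⟫ ^ 2)

/-- The unbounded operator `A`, defined spectrally by `A f = ∑ μ_k ⟨f, w_k⟩ w_k`. -/
def opA (w : ℕ → H) (μ : ℕ → ℝ) (f : H) : H :=
  ∑' k, (μ k * ⟪f, w k⟫) • w k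

/-- The worst case recovery error `ε_δ(A, W, G, Ψ)_H` of the pair `(G, Ψ)`. -/
def recErr (w : ℕ → H) (μ ξ : ℕ → ℝ) (δ : ℝ) {N : ℕ}
    (G : H → Fin N → ℝ) (Ψ : (Fin N → ℝ) → H) : ℝ≥0∞ :=
  ⨆ (f : H) (_ : MemW w ξ f ∧ normW w ξ f ≤ 1) (fδ : H) (_ : ‖f - fδ‖ ≤ δ),
    ENNReal.ofReal ‖opA w μ f - Ψ (G fδ)‖

/-- The `(N,δ)`-optimal recovery error `R_{N,δ}(A, W)_H`. -/
def Ropt (w : ℕ → H) (μ ξ : ℕ → ℝ) (δ : ℝ) (N : ℕ) : ℝ≥0∞ :=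
  ⨅ (G : H → Fin N → ℝ) (_ : Continuous G) (Ψ : (Fin N → ℝ) → H),
    recErr w μ ξ δ G Ψ

/-- The `δ`-optimal recovery error `R_δ(A, W)_H`. -/
def RoptAll (w : ℕ → H) (μ ξ : ℕ → ℝ) (δ : ℝ) : ℝ≥0∞ :=
  ⨅ N : ℕ, Ropt w μ ξ δ N

/-- The critical index `N_δ = min {N ≥ 0 : ξ_N ≥ 1/δ}`. -/
def Ncrit (ξ : ℕ → ℝ) (δ : ℝ) : ℕ := sInf {N : ℕ | 1 / δ ≤ ξ N}

/-- The information map of the truncation method: the first `N` Fourier coefficients. -/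
def Gtrunc (w : ℕ → H) (N : ℕ) (f : H) : Fin N → ℝ := fun k => ⟪f, w k⟫

/-- The recovery algorithm of the truncation method. -/
def Psitrunc (w : ℕ → H) (μ : ℕ → ℝ) (N : ℕ) (x : Fin N → ℝ) : H :=
  ∑ k : Fin N, (μ k * x k) • w k

set_option linter.unusedSectionVars false

lemma rpow_two_aux (a : ℝ) : ‖a‖ ^ ((2:ℝ≥0∞)).toReal = a ^ 2 := by
  rw [ENNReal.toReal_ofNat]
  rw [show ((2:ℝ)) = ((2:ℕ):ℝ) by norm_num, Real.rpow_natCast, Real.norm_eq_abs, sq_abs]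

lemma memℓp_of_sq {g : ℕ → ℝ} (hg : Summable fun k => g k ^ 2) : Memℓp g 2 := by
  apply memℓp_gen
  simpa only [rpow_two_aux] using hg

lemma lp_norm_sq (x : lp (fun _ : ℕ => ℝ) 2) : ‖x‖ ^ 2 = ∑' k, (x k) ^ 2 := by
  have h := lp.norm_rpow_eq_tsum (p := 2) (by norm_num) x
  simp only [rpow_two_aux] at h
  rw [← h, ENNReal.toReal_ofNat, show ((2:ℝ)) = ((2:ℕ):ℝ) by norm_num, Real.rpow_natCast]

lemma lp_summable_sq (x : lp (fun _ : ℕ => ℝ) 2) : Summable fun k => (x k) ^ 2 := by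
  have := (memℓp_gen_iff (p := 2) (by norm_num)).1 (lp.memℓp x)
  simpa only [rpow_two_aux] using this

lemma summable_mu_sq {w : ℕ → H} {μ ξ : ℕ → ℝ} (hμpos : ∀ k, 0 ≤ μ k) (hξpos : ∀ k, 0 < ξ k)
    (hanti : Antitone fun k => μ k / ξ k) {f : H} (hf : MemW w ξ f) :
    Summable fun k => (μ k * ⟪f, w k⟫) ^ 2 := by
  apply Summable.of_nonneg_of_le (fun k => sq_nonneg _) (fun k => ?_)
    (hf.mul_left ((μ 0 / ξ 0) ^ 2))
  have hne : ξ k ≠ 0 := (hξpos k).ne'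
  have h1 : μ k * ⟪f, w k⟫ = (μ k / ξ k) * (ξ k * ⟪f, w k⟫) := by field_simp
  have h2 : (μ k / ξ k) ^ 2 ≤ (μ 0 / ξ 0) ^ 2 := by
    have ha := hanti (Nat.zero_le k)
    have hb : 0 ≤ μ k / ξ k := div_nonneg (hμpos k) (hξpos k).le
    nlinarith
  have h3 : (ξ k * ⟪f, w k⟫) ^ 2 = ξ k ^ 2 * ⟪f, w k⟫ ^ 2 := mul_pow _ _ _
  rw [h1, mul_pow, h3]
  exact mul_le_mul_of_nonneg_right h2 (by positivity)

/-- The key norm identity for the truncation method error. -/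
lemma err_norm_sq (w : ℕ → H) (b : HilbertBasis ℕ ℝ H) (hbw : ∀ i, b i = w i) (μ ξ : ℕ → ℝ)
    (hμpos : ∀ k, 0 ≤ μ k) (hξpos : ∀ k, 0 < ξ k)
    (hanti : Antitone fun k => μ k / ξ k) (M : ℕ) (f fδ : H) (hf : MemW w ξ f) :
    ‖opA w μ f - Psitrunc w μ M (Gtrunc w M fδ)‖ ^ 2
      = ∑ k ∈ Finset.range M, (μ k * ⟪f - fδ, w k⟫) ^ 2
        + ∑' k, (μ (k + M) * ⟪f, w (k + M)⟫) ^ 2 := by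
  classical
  have hw : w = ⇑b := funext fun i => (hbw i).symm
  subst hw
  set g : ℕ → ℝ := fun k => μ k * ⟪f, b k⟫ with hgdef
  have hg2 : Summable fun k => g k ^ 2 := summable_mu_sq hμpos hξpos hanti hf
  set x : lp (fun _ : ℕ => ℝ) 2 := ⟨g, memℓp_of_sq hg2⟩ with hxdef
  set gy : ℕ → ℝ := fun k => if k < M then μ k * ⟪fδ, b k⟫ else 0 with hgydef
  have hgy2 : Summable fun k => gy k ^ 2 := by
    apply summable_of_ne_finset_zero (s := Finset.range M)
    intro i hi
    simp only [Finset.mem_range] at hi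
    simp [hgydef, hi]
  set y : lp (fun _ : ℕ => ℝ) 2 := ⟨gy, memℓp_of_sq hgy2⟩ with hydef
  have hx : opA (⇑b) μ f = b.repr.symm x := by
    rw [opA, ← (b.hasSum_repr_symm x).tsum_eq]
  have hy : Psitrunc (⇑b) μ M (Gtrunc (⇑b) M fδ) = b.repr.symm y := by
    rw [← (b.hasSum_repr_symm y).tsum_eq]
    have h0 : ∀ i ∉ Finset.range M, (y : ℕ → ℝ) i • b i = 0 := by
      intro i hi
      simp only [Finset.mem_range, not_lt] at hi
      have hgy0 : (y : ℕ → ℝ) i = 0 := by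
        show gy i = 0
        simp only [hgydef]
        exact if_neg (by omega)
      rw [hgy0, zero_smul]
    rw [tsum_eq_sum h0]
    simp only [Psitrunc, Gtrunc]
    rw [Fin.sum_univ_eq_sum_range (fun i => (μ i * ⟪fδ, b i⟫) • b i) M]
    apply Finset.sum_congr rfl
    intro i hi
    have hyi : gy i = μ i * ⟪fδ, b i⟫ := by
      simp only [hgydef]
      exact if_pos (Finset.mem_range.1 hi)
    exact (congrArg (fun t => t • b i) hyi).symm
  rw [hx, hy, ← map_sub, b.repr.symm.norm_map, lp_norm_sq]
  have hcoe : ∀ k, ((x - y : lp (fun _ : ℕ => ℝ) 2) : ℕ → ℝ) k = g k - gy k := by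
    intro k; rw [lp.coeFn_sub]; rfl
  have hsum : Summable fun k => (g k - gy k) ^ 2 := by
    have := lp_summable_sq (x - y)
    simpa only [hcoe] using this
  simp only [hcoe]
  rw [← hsum.sum_add_tsum_nat_add M]
  congr 1
  · apply Finset.sum_congr rfl
    intro i hi
    have hiM := Finset.mem_range.1 hi
    simp only [hgdef, hgydef, if_pos hiM]
    rw [inner_sub_left]
    ring
  · congr 1
    ext k
    have hk : ¬ (k + M < M) := by omega
    simp [hgdef, hgydef, hk]

set_option maxHeartbeats 1000000 in
/-- no substantial gain from truncation with `N` above `N_δ`. -/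
theorem stmt8
    (w : ℕ → H) (hw_on : Orthonormal ℝ w)
    (hw_dense : Dense (Submodule.span ℝ (Set.range w) : Set H))
    (μ ξ : ℕ → ℝ)
    (hμ0 : 0 < μ 0) (hμmono : Monotone μ) (hμtop : Tendsto μ atTop atTop)
    (hξ0 : 0 < ξ 0) (hξmono : Monotone ξ) (hξtop : Tendsto ξ atTop atTop)
    (hratio : Tendsto (fun k => μ k / ξ k) atTop (nhds 0))
    (hanti : Antitone fun k => μ k / ξ k) :
    ∀ δ : ℝ, 0 < δ → δ < 1 / ξ 0 → ∀ N : ℕ, Ncrit ξ δ < N →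
      (ENNReal.ofReal (Real.sqrt 2))⁻¹ *
            recErr w μ ξ δ (Gtrunc w (Ncrit ξ δ)) (Psitrunc w μ (Ncrit ξ δ)) ≤
          recErr w μ ξ δ (Gtrunc w N) (Psitrunc w μ N) ∧
        (ENNReal.ofReal (Real.sqrt 2))⁻¹ * Ropt w μ ξ δ (Ncrit ξ δ) ≤
          (ENNReal.ofReal (Real.sqrt 2))⁻¹ *
            recErr w μ ξ δ (Gtrunc w (Ncrit ξ δ)) (Psitrunc w μ (Ncrit ξ δ)) := by
  intro δ hδ hδξ N hN
  have hμpos : ∀ k, 0 < μ k := fun k => hμ0.trans_le (hμmono (Nat.zero_le k))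
  have hξpos : ∀ k, 0 < ξ k := fun k => hξ0.trans_le (hξmono (Nat.zero_le k))
  set M := Ncrit ξ δ with hMdef
  -- basic facts about M
  have hSne : {n : ℕ | 1 / δ ≤ ξ n}.Nonempty := by
    obtain ⟨n, hn⟩ := (hξtop.eventually_ge_atTop (1 / δ)).exists
    exact ⟨n, hn⟩
  have hMmem : 1 / δ ≤ ξ M := Nat.sInf_mem hSne
  have hξ0' : ξ 0 < 1 / δ := by
    have h1 : δ * ξ 0 < 1 := (lt_div_iff₀ hξ0).1 hδξ
    rw [lt_div_iff₀ hδ]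
    linarith [mul_comm δ (ξ 0)]
  have hM1 : 1 ≤ M := by
    rcases Nat.eq_zero_or_pos M with h0 | h1
    · rw [h0] at hMmem; linarith
    · exact h1
  have hMN : M ≤ N - 1 := by omega
  have hN1 : 1 ≤ N := by omega
  have hμNδ : 0 ≤ μ (N - 1) * δ := mul_nonneg (hμpos _).le hδ.le
  -- Hilbert basis
  have hsp : ⊤ ≤ (Submodule.span ℝ (Set.range w)).topologicalClosure := by
    rw [Submodule.dense_iff_topologicalClosure_eq_top] at hw_dense
    rw [hw_dense]
  set b := HilbertBasis.mk hw_on hsp with hbdef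
  have hbw : ⇑b = w := HilbertBasis.coe_mk _ _
  -- Lower bound for the N-truncation error
  have hlow : ENNReal.ofReal (μ (N - 1) * δ) ≤ recErr w μ ξ δ (Gtrunc w N) (Psitrunc w μ N) := by
    have hf0 : MemW w ξ (0 : H) ∧ normW w ξ (0 : H) ≤ 1 := by
      constructor
      · unfold MemW; simp [summable_zero]
      · unfold normW; simp
    have hfd : ‖(0 : H) - δ • w (N - 1)‖ ≤ δ := by
      rw [zero_sub, norm_neg, norm_smul, hw_on.1 (N - 1)]
      simp [abs_of_pos hδ]
    have hA0 : opA w μ (0 : H) = 0 := by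
      unfold opA; simp
    have hpsi : Psitrunc w μ N (Gtrunc w N (δ • w (N - 1))) = (μ (N - 1) * δ) • w (N - 1) := by
      rw [Psitrunc, Finset.sum_eq_single (⟨N - 1, by omega⟩ : Fin N)]
      · simp only [Gtrunc]
        rw [real_inner_smul_left, orthonormal_iff_ite.1 hw_on]
        simp
      · intro k _ hk
        have hne : (N - 1 : ℕ) ≠ (k : ℕ) := by
          intro h
          apply hk
          exact Fin.ext (show (k : ℕ) = N - 1 by omega)
        simp only [Gtrunc]
        rw [real_inner_smul_left, orthonormal_iff_ite.1 hw_on, if_neg hne]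
        simp
      · intro h
        exact absurd (Finset.mem_univ _) h
    have hval : ‖opA w μ (0 : H) - Psitrunc w μ N (Gtrunc w N (δ • w (N - 1)))‖
        = μ (N - 1) * δ := by
      rw [hA0, hpsi, zero_sub, norm_neg, norm_smul, hw_on.1 (N - 1), Real.norm_eq_abs,
        abs_of_nonneg hμNδ, mul_one]
    calc ENNReal.ofReal (μ (N - 1) * δ)
        = ENNReal.ofReal ‖opA w μ (0 : H) - Psitrunc w μ N (Gtrunc w N (δ • w (N - 1)))‖ := by
          rw [hval]
      _ ≤ _ := by
          refine le_iSup_of_le (0 : H) ?_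
          refine le_iSup_of_le hf0 ?_
          refine le_iSup_of_le (δ • w (N - 1)) ?_
          exact le_iSup_of_le hfd le_rfl
  -- Upper bound for the M-truncation error
  have hupp : recErr w μ ξ δ (Gtrunc w M) (Psitrunc w μ M)
      ≤ ENNReal.ofReal (Real.sqrt 2 * (μ (N - 1) * δ)) := by
    refine iSup_le fun f => iSup_le fun hf => iSup_le fun fδ => iSup_le fun hfδ => ?_
    apply ENNReal.ofReal_le_ofReal
    have hfW : MemW w ξ f := hf.1
    have key := err_norm_sq w b (fun i => congrFun hbw i) μ ξ
      (fun k => (hμpos k).le) hξpos hanti M f fδ hfW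
    -- bound the head term
    have hbess : ∑ k ∈ Finset.range M, ⟪f - fδ, w k⟫ ^ 2 ≤ ‖f - fδ‖ ^ 2 := by
      have h := hw_on.sum_inner_products_le (s := Finset.range M) (x := f - fδ)
      simpa [real_inner_comm, Real.norm_eq_abs, sq_abs] using h
    have hS1 : ∑ k ∈ Finset.range M, (μ k * ⟪f - fδ, w k⟫) ^ 2 ≤ (μ (N - 1) * δ) ^ 2 := by
      have h1 : ∀ k ∈ Finset.range M,
          (μ k * ⟪f - fδ, w k⟫) ^ 2 ≤ μ (N - 1) ^ 2 * ⟪f - fδ, w k⟫ ^ 2 := by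
        intro k hk
        have hkN : k ≤ N - 1 := by
          have := Finset.mem_range.1 hk
          omega
        have hμk : μ k ≤ μ (N - 1) := hμmono hkN
        rw [mul_pow]
        exact mul_le_mul_of_nonneg_right
          (by nlinarith [(hμpos k).le, (hμpos (N - 1)).le]) (sq_nonneg _)
      calc ∑ k ∈ Finset.range M, (μ k * ⟪f - fδ, w k⟫) ^ 2
          ≤ ∑ k ∈ Finset.range M, μ (N - 1) ^ 2 * ⟪f - fδ, w k⟫ ^ 2 := Finset.sum_le_sum h1
        _ = μ (N - 1) ^ 2 * ∑ k ∈ Finset.range M, ⟪f - fδ, w k⟫ ^ 2 := by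
            rw [Finset.mul_sum]
        _ ≤ μ (N - 1) ^ 2 * ‖f - fδ‖ ^ 2 :=
            mul_le_mul_of_nonneg_left hbess (sq_nonneg _)
        _ ≤ μ (N - 1) ^ 2 * δ ^ 2 := by
            have : ‖f - fδ‖ ^ 2 ≤ δ ^ 2 := by nlinarith [norm_nonneg (f - fδ)]
            exact mul_le_mul_of_nonneg_left this (sq_nonneg _)
        _ = (μ (N - 1) * δ) ^ 2 := by ring
    -- bound the tail term
    have hsum_all : Summable fun k => (μ k * ⟪f, w k⟫) ^ 2 :=
      summable_mu_sq (fun k => (hμpos k).le) hξpos hanti hfW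
    have hsum_sh : Summable fun k => (μ (k + M) * ⟪f, w (k + M)⟫) ^ 2 :=
      (summable_nat_add_iff M).2 hsum_all
    have hWsh : Summable fun k => ξ (k + M) ^ 2 * ⟪f, w (k + M)⟫ ^ 2 :=
      (summable_nat_add_iff M).2 hfW
    have hterm : ∀ k, (μ (k + M) * ⟪f, w (k + M)⟫) ^ 2
        ≤ (μ M / ξ M) ^ 2 * (ξ (k + M) ^ 2 * ⟪f, w (k + M)⟫ ^ 2) := by
      intro k
      have hne : ξ (k + M) ≠ 0 := (hξpos _).ne'
      have h1 : μ (k + M) * ⟪f, w (k + M)⟫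
          = (μ (k + M) / ξ (k + M)) * (ξ (k + M) * ⟪f, w (k + M)⟫) := by field_simp
      have h2 : (μ (k + M) / ξ (k + M)) ^ 2 ≤ (μ M / ξ M) ^ 2 := by
        have ha := hanti (Nat.le_add_left M k)
        have hb : 0 ≤ μ (k + M) / ξ (k + M) := div_nonneg (hμpos _).le (hξpos _).le
        nlinarith
      have h3 : (ξ (k + M) * ⟪f, w (k + M)⟫) ^ 2
          = ξ (k + M) ^ 2 * ⟪f, w (k + M)⟫ ^ 2 := mul_pow _ _ _
      rw [h1, mul_pow, h3]
      exact mul_le_mul_of_nonneg_right h2 (by positivity)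
    have htail1 : ∑' k, ξ (k + M) ^ 2 * ⟪f, w (k + M)⟫ ^ 2 ≤ 1 := by
      have hfull : ∑' k, ξ k ^ 2 * ⟪f, w k⟫ ^ 2 ≤ 1 := by
        have hnn : 0 ≤ ∑' k, ξ k ^ 2 * ⟪f, w k⟫ ^ 2 :=
          tsum_nonneg fun k => by positivity
        have hs := hf.2
        unfold normW at hs
        nlinarith [Real.sq_sqrt hnn, Real.sqrt_nonneg (∑' k, ξ k ^ 2 * ⟪f, w k⟫ ^ 2)]
      have hsplit := hfW.sum_add_tsum_nat_add M
      have hnn2 : 0 ≤ ∑ k ∈ Finset.range M, ξ k ^ 2 * ⟪f, w k⟫ ^ 2 :=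
        Finset.sum_nonneg fun k _ => by positivity
      linarith
    have hS2 : ∑' k, (μ (k + M) * ⟪f, w (k + M)⟫) ^ 2 ≤ (μ (N - 1) * δ) ^ 2 := by
      have hstep : ∑' k, (μ (k + M) * ⟪f, w (k + M)⟫) ^ 2
          ≤ (μ M / ξ M) ^ 2 * ∑' k, ξ (k + M) ^ 2 * ⟪f, w (k + M)⟫ ^ 2 := by
        rw [← tsum_mul_left]
        exact Summable.tsum_le_tsum hterm hsum_sh (hWsh.mul_left _)
      have hμMδ : μ M / ξ M ≤ μ M * δ := by
        rw [div_le_iff₀ (hξpos M)]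
        have h1 : 1 ≤ ξ M * δ := by
          have := (div_le_iff₀ hδ).1 hMmem
          linarith [mul_comm (ξ M) δ]
        nlinarith [(hμpos M).le]
      have hμMN : μ M ≤ μ (N - 1) := hμmono hMN
      have h0 : 0 ≤ μ M / ξ M := div_nonneg (hμpos M).le (hξpos M).le
      calc ∑' k, (μ (k + M) * ⟪f, w (k + M)⟫) ^ 2
          ≤ (μ M / ξ M) ^ 2 * ∑' k, ξ (k + M) ^ 2 * ⟪f, w (k + M)⟫ ^ 2 := hstep
        _ ≤ (μ M / ξ M) ^ 2 * 1 := mul_le_mul_of_nonneg_left htail1 (sq_nonneg _)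
        _ = (μ M / ξ M) ^ 2 := mul_one _
        _ ≤ (μ (N - 1) * δ) ^ 2 :=
            pow_le_pow_left₀ h0 (hμMδ.trans (mul_le_mul_of_nonneg_right hμMN hδ.le)) 2
    -- combine
    have hsq : ‖opA w μ f - Psitrunc w μ M (Gtrunc w M fδ)‖ ^ 2
        ≤ 2 * (μ (N - 1) * δ) ^ 2 := by
      rw [key]; linarith
    have h2eq : 2 * (μ (N - 1) * δ) ^ 2 = (Real.sqrt 2 * (μ (N - 1) * δ)) ^ 2 := by
      conv_rhs => rw [mul_pow, Real.sq_sqrt (by norm_num : (0:ℝ) ≤ 2)]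
    have := Real.sqrt_le_sqrt hsq
    rw [Real.sqrt_sq (norm_nonneg _), h2eq,
      Real.sqrt_sq (mul_nonneg (Real.sqrt_nonneg 2) hμNδ)] at this
    exact this
  -- the √2 constant
  have h2ne : ENNReal.ofReal (Real.sqrt 2) ≠ 0 :=
    (ENNReal.ofReal_pos.2 (Real.sqrt_pos.2 (by norm_num))).ne'
  have h2top : ENNReal.ofReal (Real.sqrt 2) ≠ ⊤ := ENNReal.ofReal_ne_top
  constructor
  · calc (ENNReal.ofReal (Real.sqrt 2))⁻¹ * recErr w μ ξ δ (Gtrunc w M) (Psitrunc w μ M)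
        ≤ (ENNReal.ofReal (Real.sqrt 2))⁻¹ *
            (ENNReal.ofReal (Real.sqrt 2) * recErr w μ ξ δ (Gtrunc w N) (Psitrunc w μ N)) := by
          apply mul_le_mul_right
          calc recErr w μ ξ δ (Gtrunc w M) (Psitrunc w μ M)
              ≤ ENNReal.ofReal (Real.sqrt 2 * (μ (N - 1) * δ)) := hupp
            _ = ENNReal.ofReal (Real.sqrt 2) * ENNReal.ofReal (μ (N - 1) * δ) :=
                ENNReal.ofReal_mul (Real.sqrt_nonneg 2)
            _ ≤ ENNReal.ofReal (Real.sqrt 2) *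
                recErr w μ ξ δ (Gtrunc w N) (Psitrunc w μ N) := mul_le_mul_right hlow _
      _ = recErr w μ ξ δ (Gtrunc w N) (Psitrunc w μ N) := by
          rw [← mul_assoc, ENNReal.inv_mul_cancel h2ne h2top, one_mul]
  · apply mul_le_mul_right
    have hcont : Continuous (Gtrunc w M) := by
      apply continuous_pi
      intro k
      exact (Continuous.congr (innerSL ℝ (w k)).continuous fun f => real_inner_comm _ _)
    exact iInf_le_of_le (Gtrunc w M) (le_trans (iInf_le _ hcont) (iInf_le _ (Psitrunc w μ M)))
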